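/- Let H be a real symmetric n×n matrix strictly supported on G and let ψ ∈ ℝ^V be an eigenvector of H with eigenvalue λ having no zero entries. Then n_-([Φ]_{dℝ^V}) = n_-(H − λI), where dℝ^V ⊆ ℝ^E is the image of the coboundary map d. -/

import Mathlib

open Matrix

/-- A finite simple graph with a chosen orientation of each edge:
`E` is the edge index type, each edge `e` goes from `src e` to `tgt e`. -/
structure OrientedGraph (V E : Type*) where
  src : E → V
  tgt : E → V
  loopless : ∀ e, src e ≠ tgt e
  edgeInj : ∀ e f, (src e = src f ∧ tgt e = tgt f) ∨ (src e = tgt f ∧ tgt e = src f) → e = f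

/-- The underlying simple graph: `r` and `s` are adjacent iff some oriented edge joins them. -/
def OrientedGraph.toSimpleGraph {V E : Type*} (G : OrientedGraph V E) : SimpleGraph V where
  Adj r s := ∃ e, (G.src e = r ∧ G.tgt e = s) ∨ (G.src e = s ∧ G.tgt e = r)
  symm := by
    constructor
    intro r s h
    obtain ⟨e, h⟩ := h
    exact ⟨e, h.symm⟩
  loopless := by
    constructor
    intro r h
    obtain ⟨e, h⟩ := h
    rcases h with ⟨h1, h2⟩ | ⟨h1, h2⟩ <;> exact G.loopless e (h1.trans h2.symm)

/-- `H` is strictly supported on `G`: off-diagonal entries are nonzero exactly on edges. -/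
def OrientedGraph.StrictSupport {V E : Type*} (G : OrientedGraph V E)
    (H : Matrix V V ℝ) : Prop :=
  ∀ r s, r ≠ s → (H r s ≠ 0 ↔ G.toSimpleGraph.Adj r s)

/-- `H` is supported on `G`: off-diagonal nonzero entries occur only on edges. -/
def OrientedGraph.Support {V E : Type*} (G : OrientedGraph V E)
    (H : Matrix V V ℝ) : Prop :=
  ∀ r s, r ≠ s → H r s ≠ 0 → G.toSimpleGraph.Adj r s

/-- The coboundary map `d : ℝ^V → ℝ^E`, `(dθ)_{(r→s)} = θ_s - θ_r`, as an `E × V` matrix. -/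
def OrientedGraph.cob {V E : Type*} [DecidableEq V] (G : OrientedGraph V E) :
    Matrix E V ℝ :=
  Matrix.of fun e v => (if G.tgt e = v then (1 : ℝ) else 0) - (if G.src e = v then (1 : ℝ) else 0)

/-- The cycle space `Z = ker dᵀ ⊆ ℝ^E`. -/
noncomputable def OrientedGraph.cycleSpace {V E : Type*} [Fintype V] [Fintype E]
    [DecidableEq V] (G : OrientedGraph V E) : Submodule ℝ (E → ℝ) :=
  LinearMap.ker (G.cob)ᵀ.mulVecLin

/-- The diagonal matrix `Φ` on `ℝ^E` with entries `Φ_{(r→s)} = -ψ_r H_{rs} ψ_s`. -/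
noncomputable def PhiMat {V E : Type*} [DecidableEq E] (G : OrientedGraph V E)
    (H : Matrix V V ℝ) (ψ : V → ℝ) : Matrix E E ℝ :=
  Matrix.diagonal fun e => -(ψ (G.src e) * H (G.src e) (G.tgt e) * ψ (G.tgt e))

/-- The nodal count `ν(ψ,H) = #{(r→s) ∈ E : ψ_r H_{rs} ψ_s > 0}`. -/
noncomputable def nodalCount {V E : Type*} (G : OrientedGraph V E)
    (H : Matrix V V ℝ) (ψ : V → ℝ) : ℕ :=
  Nat.card {e : E // 0 < ψ (G.src e) * H (G.src e) (G.tgt e) * ψ (G.tgt e)}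

/-- `C` is a frame for the cycle space: its columns form a basis of `Z`. -/
def IsFrame {V E : Type*} [Fintype V] [Fintype E] [DecidableEq V]
    (G : OrientedGraph V E) {β : ℕ} (C : Matrix E (Fin β) ℝ) : Prop :=
  LinearMap.ker C.mulVecLin = ⊥ ∧ LinearMap.range C.mulVecLin = G.cycleSpace

/-- `n₋(A)`: the number of negative eigenvalues (with multiplicity) of a hermitian matrix. -/
noncomputable def negEig {𝕜 : Type*} [RCLike 𝕜] {m : Type*} [Fintype m] [DecidableEq m]
    (A : Matrix m m 𝕜) : ℕ :=
  if h : A.IsHermitian then Nat.card {i // h.eigenvalues i < 0} else 0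

/-- `n₊(A)`: the number of positive eigenvalues (with multiplicity) of a hermitian matrix. -/
noncomputable def posEig {𝕜 : Type*} [RCLike 𝕜] {m : Type*} [Fintype m] [DecidableEq m]
    (A : Matrix m m 𝕜) : ℕ :=
  if h : A.IsHermitian then Nat.card {i // 0 < h.eigenvalues i} else 0

/-- `n₀(A)`: the number of zero eigenvalues of a hermitian matrix, i.e. `dim ker A`. -/
noncomputable def zeroEig {𝕜 : Type*} [RCLike 𝕜] {m : Type*} [Fintype m] [DecidableEq m]
    (A : Matrix m m 𝕜) : ℕ :=
  Module.finrank 𝕜 (LinearMap.ker A.mulVecLin)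

/-- `n₋([A]_W)`: the Morse index (number of negative eigenvalues) of the compression of
a hermitian matrix `A` to the subspace `W`, i.e. the maximal dimension of a subspace of `W`
on which the hermitian form of `A` is negative definite. -/
noncomputable def negIndexOn {𝕜 : Type*} [RCLike 𝕜] {m : Type*} [Fintype m]
    (A : Matrix m m 𝕜) (W : Submodule 𝕜 (m → 𝕜)) : ℕ :=
  sSup {k : ℕ | ∃ U : Submodule 𝕜 (m → 𝕜), U ≤ W ∧ Module.finrank 𝕜 U = k ∧
    ∀ x ∈ U, x ≠ 0 → RCLike.re (star x ⬝ᵥ A.mulVec x) < 0}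

/-- `n₊([A]_W)`: the number of positive eigenvalues of the compression of a hermitian
matrix `A` to the subspace `W`. -/
noncomputable def posIndexOn {𝕜 : Type*} [RCLike 𝕜] {m : Type*} [Fintype m]
    (A : Matrix m m 𝕜) (W : Submodule 𝕜 (m → 𝕜)) : ℕ :=
  sSup {k : ℕ | ∃ U : Submodule 𝕜 (m → 𝕜), U ≤ W ∧ Module.finrank 𝕜 U = k ∧
    ∀ x ∈ U, x ≠ 0 → 0 < RCLike.re (star x ⬝ᵥ A.mulVec x)}

/-- The linear functional `x ↦ v ⬝ᵥ x`. -/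
noncomputable def dotLeft {𝕜 : Type*} [RCLike 𝕜] {m : Type*} [Fintype m] (v : m → 𝕜) :
    (m → 𝕜) →ₗ[𝕜] 𝕜 where
  toFun x := v ⬝ᵥ x
  map_add' x y := by simp [dotProduct_add]
  map_smul' c x := by simp [dotProduct_smul]

/-- `n₀([A]_W)`: the dimension of the kernel of the compression of `A` to `W`,
i.e. of `{x ∈ W : Ax ⊥ W}`. -/
noncomputable def zeroIndexOn {𝕜 : Type*} [RCLike 𝕜] {m : Type*} [Fintype m]
    (A : Matrix m m 𝕜) (W : Submodule 𝕜 (m → 𝕜)) : ℕ :=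
  Module.finrank 𝕜
    ↥(W ⊓ ⨅ y : W, LinearMap.ker ((dotLeft (star (y : m → 𝕜))).comp A.mulVecLin))

/-- Extension of `α ∈ ℝ^E` to an antisymmetric function on pairs of vertices:
`α_{rs} = α_e` if `e = (r→s) ∈ E`, `α_{rs} = -α_e` if `e = (s→r) ∈ E`, and `0` otherwise. -/
noncomputable def alphaExt {V E : Type*} [Fintype E] [DecidableEq V]
    (G : OrientedGraph V E) (α : E → ℝ) (r s : V) : ℝ :=
  ∑ e : E, ((if G.src e = r ∧ G.tgt e = s then α e else 0) -
            (if G.src e = s ∧ G.tgt e = r then α e else 0))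

/-- The phase-perturbed matrix `H_α` with `(H_α)_{rs} = e^{iα_{rs}} H_{rs}` for `r ≠ s`. -/
noncomputable def phaseMat {V E : Type*} [Fintype E] [DecidableEq V]
    (G : OrientedGraph V E) (H : Matrix V V ℝ) (α : E → ℝ) : Matrix V V ℂ :=
  Matrix.of fun r s =>
    if r = s then (H r r : ℂ)
    else Complex.exp (Complex.I * (alphaExt G α r s : ℂ)) * (H r s : ℂ)


lemma dot_sum {m ι : Type*} [Fintype m] [Fintype ι] (x : m → ℝ) (f : ι → m → ℝ) :
    x ⬝ᵥ ∑ i, f i = ∑ i, x ⬝ᵥ f i := by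
  simp only [dotProduct, Finset.sum_apply, Finset.mul_sum]
  exact Finset.sum_comm

section Spectral
variable {m : Type*} [Fintype m] [DecidableEq m] {A : Matrix m m ℝ} (hA : A.IsHermitian)

noncomputable def evec (i : m) : m → ℝ := hA.eigenvectorBasis i

lemma evec_dot (i j : m) : evec hA i ⬝ᵥ evec hA j = if i = j then 1 else 0 := by
  have h := hA.eigenvectorBasis.orthonormal
  rw [orthonormal_iff_ite] at h
  have h2 := h i j
  rw [EuclideanSpace.inner_eq_star_dotProduct] at h2
  rw [dotProduct_comm]
  simpa [evec] using h2

lemma evec_expand (x : m → ℝ) : x = ∑ i, (evec hA i ⬝ᵥ x) • evec hA i := by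
  have h := hA.eigenvectorBasis.sum_repr' (WithLp.toLp 2 x)
  have h2 : ∀ i, (inner ℝ (hA.eigenvectorBasis i) (WithLp.toLp 2 x) : ℝ) = evec hA i ⬝ᵥ x := by
    intro i
    rw [EuclideanSpace.inner_eq_star_dotProduct]
    simp [evec, dotProduct, mul_comm]
  have h3 := congrArg WithLp.ofLp h
  simp only [WithLp.ofLp_sum, WithLp.ofLp_smul, h2] at h3
  exact h3.symm

lemma quadform_eq (x : m → ℝ) :
    x ⬝ᵥ A.mulVec x = ∑ i, hA.eigenvalues i * (evec hA i ⬝ᵥ x)^2 := by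
  have hAx : A.mulVec x = ∑ i, ((evec hA i ⬝ᵥ x) * hA.eigenvalues i) • evec hA i := by
    conv_lhs => rw [evec_expand hA x]
    rw [← mulVecLin_apply, map_sum]
    refine Finset.sum_congr rfl fun i _ => ?_
    rw [_root_.map_smul, mulVecLin_apply, mul_smul]
    congr 1
    exact hA.mulVec_eigenvectorBasis i
  rw [hAx, dot_sum]
  refine Finset.sum_congr rfl fun i _ => ?_
  rw [dotProduct_smul, smul_eq_mul, dotProduct_comm]
  ring

lemma eq_zero_of_coords (x : m → ℝ) (h : ∀ i, evec hA i ⬝ᵥ x = 0) : x = 0 := by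
  conv_lhs => rw [evec_expand hA x]
  simp [h]

end Spectral

section Var
variable {m : Type*} [Fintype m] [DecidableEq m] {A : Matrix m m ℝ} (hA : A.IsHermitian)

noncomputable def Lmap (p : m → Prop) [DecidablePred p] : (m → ℝ) →ₗ[ℝ] ({i // p i} → ℝ) where
  toFun x := fun i => evec hA i.1 ⬝ᵥ x
  map_add' x y := by ext i; simp [dotProduct_add]
  map_smul' c x := by ext i; simp [dotProduct_smul]

lemma Lmap_surj (p : m → Prop) [DecidablePred p] : Function.Surjective (Lmap hA p) := by
  intro d
  refine ⟨∑ j : {i // p i}, d j • evec hA j.1, ?_⟩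
  ext i
  simp only [Lmap, LinearMap.coe_mk, AddHom.coe_mk, dot_sum, dotProduct_smul, smul_eq_mul,
    evec_dot]
  rw [Finset.sum_eq_single i]
  · simp
  · intro j _ hji
    rw [if_neg (fun h => hji (Subtype.ext h.symm)), mul_zero]
  · intro h
    exact absurd (Finset.mem_univ i) h

lemma Lmap_finrank_ker (p : m → Prop) [DecidablePred p] :
    Module.finrank ℝ (LinearMap.ker (Lmap hA p)) = Fintype.card m - Fintype.card {i // p i} := by
  have h := LinearMap.finrank_range_add_finrank_ker (Lmap hA p)
  rw [LinearMap.range_eq_top.2 (Lmap_surj hA p), finrank_top] at h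
  simp only [Module.finrank_pi, Module.finrank_fintype_fun_eq_card] at h
  omega

lemma mem_ker_Lmap (p : m → Prop) [DecidablePred p] (x : m → ℝ) :
    x ∈ LinearMap.ker (Lmap hA p) ↔ ∀ i, p i → evec hA i ⬝ᵥ x = 0 := by
  constructor
  · intro h i hi
    exact congrFun (LinearMap.mem_ker.1 h) ⟨i, hi⟩
  · intro h
    ext i
    exact h i.1 i.2

lemma negEig_eq_card (hA : A.IsHermitian) : negEig A = Fintype.card {i // hA.eigenvalues i < 0} := by
  rw [negEig, dif_pos hA, Nat.card_eq_fintype_card]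

lemma exists_negdef_subspace (hA : A.IsHermitian) :
    ∃ U : Submodule ℝ (m → ℝ), Module.finrank ℝ U = negEig A ∧
      ∀ x ∈ U, x ≠ 0 → x ⬝ᵥ A.mulVec x < 0 := by
  refine ⟨LinearMap.ker (Lmap hA (fun i => 0 ≤ hA.eigenvalues i)), ?_, ?_⟩
  · rw [Lmap_finrank_ker, negEig_eq_card hA]
    have := Fintype.card_subtype_compl (fun i => 0 ≤ hA.eigenvalues i)
    have he : Fintype.card {i // ¬ 0 ≤ hA.eigenvalues i} =
        Fintype.card {i // hA.eigenvalues i < 0} :=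
      Fintype.card_congr (Equiv.subtypeEquivRight fun i => not_le)
    omega
  · intro x hx hx0
    rw [mem_ker_Lmap] at hx
    rw [quadform_eq hA x]
    have hex : ∃ i, evec hA i ⬝ᵥ x ≠ 0 := by
      by_contra h
      push_neg at h
      exact hx0 (eq_zero_of_coords hA x h)
    obtain ⟨i0, hi0⟩ := hex
    have hneg : hA.eigenvalues i0 < 0 := by
      by_contra h
      exact hi0 (hx i0 (not_lt.1 h))
    have : (0:ℝ) = ∑ _i : m, (0:ℝ) := by simp
    rw [this]
    refine Finset.sum_lt_sum ?_ ⟨i0, Finset.mem_univ _, ?_⟩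
    · intro i _
      by_cases hp : 0 ≤ hA.eigenvalues i
      · rw [hx i hp]; simp
      · exact mul_nonpos_of_nonpos_of_nonneg (le_of_lt (not_le.1 hp)) (sq_nonneg _)
    · exact mul_neg_of_neg_of_pos hneg (by positivity)

lemma negdef_subspace_le (hA : A.IsHermitian) (U : Submodule ℝ (m → ℝ))
    (hU : ∀ x ∈ U, x ≠ 0 → x ⬝ᵥ A.mulVec x < 0) :
    Module.finrank ℝ U ≤ negEig A := by
  set K := LinearMap.ker (Lmap hA (fun i => hA.eigenvalues i < 0)) with hK
  have hKpos : ∀ x ∈ K, 0 ≤ x ⬝ᵥ A.mulVec x := by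
    intro x hx
    rw [mem_ker_Lmap] at hx
    rw [quadform_eq hA x]
    refine Finset.sum_nonneg fun i _ => ?_
    by_cases hp : hA.eigenvalues i < 0
    · rw [hx i hp]; simp
    · exact mul_nonneg (not_lt.1 hp) (sq_nonneg _)
  have hdisj : U ⊓ K = ⊥ := by
    rw [Submodule.eq_bot_iff]
    intro x hx
    by_contra h
    exact absurd (hKpos x hx.2) (not_le.2 (hU x hx.1 h))
  have h1 := Submodule.finrank_sup_add_finrank_inf_eq U K
  rw [hdisj] at h1
  have h2 : Module.finrank ℝ ↥(U ⊔ K) ≤ Fintype.card m := by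
    have := Submodule.finrank_le (U ⊔ K)
    simpa using this
  have h3 : Module.finrank ℝ K = Fintype.card m - negEig A := by
    rw [hK, Lmap_finrank_ker, negEig_eq_card hA]
  have h4 : negEig A ≤ Fintype.card m := by
    rw [negEig_eq_card hA]
    exact Fintype.card_subtype_le _
  simp only [finrank_bot] at h1
  omega

end Var



section GraphSide
variable {V E : Type*} [Fintype V] [Fintype E] [DecidableEq V] [DecidableEq E]
  (G : OrientedGraph V E)

lemma cob_mulVec (θ : V → ℝ) (e : E) :
    (G.cob *ᵥ θ) e = θ (G.tgt e) - θ (G.src e) := by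
  simp only [OrientedGraph.cob, mulVec, dotProduct, Matrix.of_apply, sub_mul, one_mul, zero_mul,
    Finset.sum_sub_distrib, ite_mul]
  congr 1 <;> simp

lemma constant_of_cob (hconn : G.toSimpleGraph.Connected) (θ : V → ℝ)
    (h : G.cob *ᵥ θ = 0) (r s : V) : θ r = θ s := by
  have hadj : ∀ a b : V, G.toSimpleGraph.Adj a b → θ a = θ b := by
    intro a b ⟨e, he⟩
    have h2 : θ (G.tgt e) - θ (G.src e) = 0 := by
      rw [← cob_mulVec G θ e, h]; rfl
    rcases he with ⟨h1', h2'⟩ | ⟨h1', h2'⟩ <;> subst h1' <;> subst h2' <;> linarith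
  obtain ⟨w⟩ := hconn r s
  induction w with
  | nil => rfl
  | cons ha _ ih => exact (hadj _ _ ha).trans ih

lemma ker_cob (hconn : G.toSimpleGraph.Connected) :
    LinearMap.ker G.cob.mulVecLin = Submodule.span ℝ {(fun _ => (1:ℝ) : V → ℝ)} := by
  have : Nonempty V := hconn.nonempty
  obtain ⟨r₀⟩ := this
  ext θ
  rw [LinearMap.mem_ker, Submodule.mem_span_singleton]
  constructor
  · intro h
    refine ⟨θ r₀, ?_⟩
    ext r
    simp [constant_of_cob G hconn θ h r r₀]
  · rintro ⟨c, rfl⟩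
    ext e
    simp [mulVecLin_apply, cob_mulVec]

lemma finrank_ker_cob (hconn : G.toSimpleGraph.Connected) :
    Module.finrank ℝ (LinearMap.ker G.cob.mulVecLin) = 1 := by
  have : Nonempty V := hconn.nonempty
  obtain ⟨r₀⟩ := this
  rw [ker_cob G hconn, finrank_span_singleton]
  intro h
  have := congrFun h r₀
  simp at this

lemma one_ne_zero_fun [Nonempty V] : (fun _ => (1:ℝ) : V → ℝ) ≠ 0 := by
  intro h
  have := congrFun h (Classical.arbitrary V)
  simp at this

end GraphSide

section QuadId
variable {V E : Type*} [Fintype V] [Fintype E] [DecidableEq V] [DecidableEq E]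

lemma quad_id (G : OrientedGraph V E)
    (H : Matrix V V ℝ) (hsymm : H.IsSymm) (hsupp : G.StrictSupport H)
    (lam : ℝ) (ψ : V → ℝ) (heig : H.mulVec ψ = lam • ψ) (θ : V → ℝ) :
    (G.cob *ᵥ θ) ⬝ᵥ (PhiMat G H ψ) *ᵥ (G.cob *ᵥ θ) =
      (ψ * θ) ⬝ᵥ (H - lam • (1 : Matrix V V ℝ)) *ᵥ (ψ * θ) := by
  set A := H - lam • (1 : Matrix V V ℝ) with hAdef
  have hAψ : A *ᵥ ψ = 0 := by
    rw [hAdef, sub_mulVec, heig, smul_mulVec, one_mulVec, sub_self]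
  have hAsymm : ∀ r s, A r s = A s r := by
    intro r s
    simp only [hAdef, Matrix.sub_apply, Matrix.smul_apply, one_apply, smul_eq_mul]
    rw [hsymm.apply s r]
    by_cases h : r = s <;> simp [h, eq_comm]
  have hAoff : ∀ r s : V, r ≠ s → A r s = H r s := by
    intro r s h
    simp [hAdef, one_apply_ne h]
  set F : V → V → ℝ := fun r s => A r s * ψ r * ψ s with hF
  have hFsymm : ∀ r s, F r s = F s r := by
    intro r s; simp only [hF]; rw [hAsymm r s]; ring
  have hrow : ∀ r, ∑ s, F r s = 0 := by
    intro r
    have := congrFun hAψ r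
    simp only [mulVec, dotProduct, Pi.zero_apply] at this
    rw [show ∑ s, F r s = ψ r * ∑ s, A r s * ψ s from by rw [Finset.mul_sum]; congr 1; ext s; simp only [hF]; ring]
    rw [this, mul_zero]
  have hcol : ∀ s, ∑ r, F r s = 0 := by
    intro s
    rw [show ∑ r, F r s = ∑ r, F s r from Finset.sum_congr rfl fun r _ => hFsymm r s]
    exact hrow s
  -- RHS as double sum over F
  have hRHS : (ψ * θ) ⬝ᵥ A *ᵥ (ψ * θ) = ∑ r, ∑ s, F r s * θ r * θ s := by
    simp only [dotProduct, mulVec, Pi.mul_apply, Finset.mul_sum, hF]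
    refine Finset.sum_congr rfl fun r _ => Finset.sum_congr rfl fun s _ => by ring
  -- expansion of the (θr - θs)^2 double sum
  have hexp : ∑ r, ∑ s, F r s * (θ s - θ r)^2 = -2 * ∑ r, ∑ s, F r s * θ r * θ s := by
    have h1 : ∀ r s : V, F r s * (θ s - θ r)^2
        = F r s * (θ s)^2 + F r s * (θ r)^2 - 2 * (F r s * θ r * θ s) := by
      intro r s; ring
    rw [Finset.sum_congr rfl fun r _ => Finset.sum_congr rfl fun s _ => h1 r s]
    simp only [Finset.sum_sub_distrib, Finset.sum_add_distrib]
    have h2 : ∑ r, ∑ s : V, F r s * (θ r)^2 = 0 := by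
      refine Finset.sum_eq_zero fun r _ => ?_
      rw [show ∑ s : V, F r s * (θ r)^2 = (∑ s, F r s) * (θ r)^2 from (Finset.sum_mul _ _ _).symm,
        hrow r, zero_mul]
    have h3 : ∑ r, ∑ s : V, F r s * (θ s)^2 = 0 := by
      rw [Finset.sum_comm]
      refine Finset.sum_eq_zero fun s _ => ?_
      rw [show (∑ r : V, F r s * (θ s)^2) = (∑ r, F r s) * (θ s)^2 from
        (Finset.sum_mul _ _ _).symm, hcol s, zero_mul]
    rw [h2, h3]
    have h4 : ∑ r, ∑ s : V, 2 * (F r s * θ r * θ s) = 2 * ∑ r, ∑ s : V, F r s * θ r * θ s := by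
      simp [Finset.mul_sum]
    rw [h4]
    ring
  -- LHS as a sum over edges
  have hLHS : (G.cob *ᵥ θ) ⬝ᵥ (PhiMat G H ψ) *ᵥ (G.cob *ᵥ θ)
      = ∑ e : E, -(F (G.src e) (G.tgt e) * (θ (G.tgt e) - θ (G.src e))^2) := by
    simp only [dotProduct, PhiMat, mulVec_diagonal]
    refine Finset.sum_congr rfl fun e _ => ?_
    rw [cob_mulVec]
    have : A (G.src e) (G.tgt e) = H (G.src e) (G.tgt e) := hAoff _ _ (G.loopless e)
    simp only [hF, this]
    ring
  -- the double sum equals twice the edge sum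
  have hbij : ∑ r, ∑ s : V, F r s * (θ s - θ r)^2
      = ∑ x : E ⊕ E, (fun p : V × V => F p.1 p.2 * (θ p.2 - θ p.1)^2)
          ((fun x => Sum.elim (fun e => (G.src e, G.tgt e)) (fun e => (G.tgt e, G.src e)) x) x) := by
    have hps : (∑ p : V × V, F p.1 p.2 * (θ p.2 - θ p.1)^2)
        = ∑ r, ∑ s : V, F r s * (θ s - θ r)^2 := Fintype.sum_prod_type _
    rw [← hps]
    set P : V × V → ℝ := fun p => F p.1 p.2 * (θ p.2 - θ p.1)^2 with hP
    set ι : E ⊕ E → V × V := Sum.elim (fun e => (G.src e, G.tgt e)) (fun e => (G.tgt e, G.src e))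
      with hι
    refine (Finset.sum_bij_ne_zero (fun x _ _ => ι x) (fun x _ _ => Finset.mem_univ _)
      ?_ ?_ ?_).symm
    · rintro (e | e) _ _ (f | f) _ _ hef <;> simp only [hι, Sum.elim_inl, Sum.elim_inr,
        Prod.mk.injEq] at hef
      · exact congrArg Sum.inl (G.edgeInj e f (Or.inl hef))
      · exfalso
        obtain rfl := G.edgeInj e f (Or.inr hef)
        exact G.loopless e hef.1
      · exfalso
        obtain rfl := G.edgeInj e f (Or.inr ⟨hef.2, hef.1⟩)
        exact G.loopless e hef.2
      · exact congrArg Sum.inr (G.edgeInj e f (Or.inl ⟨hef.2, hef.1⟩))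
    · intro p _ hp
      have hne : p.1 ≠ p.2 := by
        intro h
        apply hp
        simp [hP, h]
      have hHne : H p.1 p.2 ≠ 0 := by
        intro h
        apply hp
        simp only [hP, hF]
        rw [hAoff _ _ hne, h]
        ring
      obtain ⟨e, he⟩ := (hsupp p.1 p.2 hne).1 hHne
      rcases he with ⟨h1, h2⟩ | ⟨h1, h2⟩
      · refine ⟨Sum.inl e, Finset.mem_univ _, ?_, ?_⟩
        · show P (ι (Sum.inl e)) ≠ 0
          simp only [hι, Sum.elim_inl, h1, h2]
          exact hp
        · show ι (Sum.inl e) = p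
          simp [hι, Prod.ext_iff, h1, h2]
      · refine ⟨Sum.inr e, Finset.mem_univ _, ?_, ?_⟩
        · show P (ι (Sum.inr e)) ≠ 0
          simp only [hι, Sum.elim_inr, h1, h2]
          exact hp
        · show ι (Sum.inr e) = p
          simp [hι, Prod.ext_iff, h1, h2]
    · intro x _ _
      rfl
  have hsum2 : ∑ x : E ⊕ E, (fun p : V × V => F p.1 p.2 * (θ p.2 - θ p.1)^2)
          ((fun x => Sum.elim (fun e => (G.src e, G.tgt e)) (fun e => (G.tgt e, G.src e)) x) x)
      = 2 * ∑ e : E, F (G.src e) (G.tgt e) * (θ (G.tgt e) - θ (G.src e))^2 := by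
    rw [Fintype.sum_sum_type]
    have : ∀ e : E, F (G.tgt e) (G.src e) * (θ (G.src e) - θ (G.tgt e))^2
        = F (G.src e) (G.tgt e) * (θ (G.tgt e) - θ (G.src e))^2 := by
      intro e
      rw [hFsymm]
      ring
    simp only [Sum.elim_inl, Sum.elim_inr]
    rw [Finset.sum_congr rfl fun e _ => this e]
    ring
  rw [hLHS, hRHS]
  have hfinal : ∑ r, ∑ s : V, F r s * (θ s - θ r)^2
      = 2 * ∑ e : E, F (G.src e) (G.tgt e) * (θ (G.tgt e) - θ (G.src e))^2 := by
    rw [hbij, hsum2]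
  have : ∑ e : E, -(F (G.src e) (G.tgt e) * (θ (G.tgt e) - θ (G.src e))^2)
      = -∑ e : E, F (G.src e) (G.tgt e) * (θ (G.tgt e) - θ (G.src e))^2 := by
    simp
  rw [this]
  linarith [hexp, hfinal]

end QuadId

/-- `n₋([Φ]_{dℝ^V}) = n₋(H - λI)`. -/
theorem neg_index_compression_coboundary
    {V E : Type*} [Fintype V] [Fintype E] [DecidableEq V] [DecidableEq E]
    (G : OrientedGraph V E) (hconn : G.toSimpleGraph.Connected)
    (H : Matrix V V ℝ) (hsymm : H.IsSymm) (hsupp : G.StrictSupport H)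
    (lam : ℝ) (ψ : V → ℝ) (heig : H.mulVec ψ = lam • ψ) (hψ : ∀ r, ψ r ≠ 0) :
    negIndexOn (PhiMat G H ψ) (LinearMap.range G.cob.mulVecLin) =
      negEig (H - lam • (1 : Matrix V V ℝ)) := by
  classical
  have hne : Nonempty V := hconn.nonempty
  obtain ⟨r₀⟩ := hne
  set A := H - lam • (1 : Matrix V V ℝ) with hAdef
  have hA : A.IsHermitian := by
    ext i j
    simp only [conjTranspose_apply, star_trivial, hAdef, Matrix.sub_apply, Matrix.smul_apply, one_apply,
      smul_eq_mul]
    rw [hsymm.apply i j]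
    by_cases h : i = j <;> simp [h, eq_comm]
  have hAψ : A *ᵥ ψ = 0 := by
    rw [hAdef, sub_mulVec, heig, smul_mulVec, one_mulVec, sub_self]
  have hψ0 : ψ ≠ 0 := fun h => hψ r₀ (congrFun h r₀)
  have hqψ : ψ ⬝ᵥ A *ᵥ ψ = 0 := by rw [hAψ]; simp
  set D := G.cob.mulVecLin with hD
  set Φ := PhiMat G H ψ with hΦ
  have hre : ∀ x : E → ℝ, RCLike.re (star x ⬝ᵥ Φ *ᵥ x) = x ⬝ᵥ Φ *ᵥ x := by
    intro x; simp
  -- multiplication by ψ as a linear equivalence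
  let mulψ : (V → ℝ) →ₗ[ℝ] (V → ℝ) :=
    { toFun := fun x => ψ * x
      map_add' := fun x y => by ext r; simp [mul_add]
      map_smul' := fun c x => by ext r; simp; ring }
  let mulψi : (V → ℝ) →ₗ[ℝ] (V → ℝ) :=
    { toFun := fun x r => (ψ r)⁻¹ * x r
      map_add' := fun x y => by ext r; simp; ring
      map_smul' := fun c x => by ext r; simp; ring }
  let Meq : (V → ℝ) ≃ₗ[ℝ] (V → ℝ) := LinearEquiv.ofLinear mulψ mulψi
    (by
      refine LinearMap.ext fun x => funext fun r => ?_
      show ψ r * ((ψ r)⁻¹ * x r) = x r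
      rw [← mul_assoc, mul_inv_cancel₀ (hψ r), one_mul])
    (by
      refine LinearMap.ext fun x => funext fun r => ?_
      show (ψ r)⁻¹ * (ψ r * x r) = x r
      rw [← mul_assoc, inv_mul_cancel₀ (hψ r), one_mul])
  have hMeq : ∀ x, Meq x = ψ * x := fun _ => rfl
  have hMeqs : ∀ x, Meq.symm x = fun r => (ψ r)⁻¹ * x r := fun _ => rfl
  have hDone : D (fun _ => (1:ℝ)) = 0 := by
    ext e
    simp [hD, mulVecLin_apply, cob_mulVec]
  have hconst : ∀ θ : V → ℝ, D θ = 0 → θ = θ r₀ • (fun _ => (1:ℝ)) := by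
    intro θ h
    ext r
    simp [constant_of_cob G hconn θ h r r₀]
  have hquad : ∀ θ : V → ℝ, (D θ) ⬝ᵥ Φ *ᵥ (D θ) = (ψ * θ) ⬝ᵥ A *ᵥ (ψ * θ) := by
    intro θ
    rw [hD, mulVecLin_apply, hΦ, hAdef]
    exact quad_id G H hsymm hsupp lam ψ heig θ
  have hkerD : Module.finrank ℝ (LinearMap.ker D) = 1 := finrank_ker_cob G hconn
  -- upper bound
  have hub : ∀ k, (∃ U : Submodule ℝ (E → ℝ), U ≤ LinearMap.range G.cob.mulVecLin ∧
      Module.finrank ℝ U = k ∧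
      ∀ x ∈ U, x ≠ 0 → RCLike.re (star x ⬝ᵥ Φ.mulVec x) < 0) → k ≤ negEig A := by
    rintro k ⟨U', hU'W, hU'rank, hU'neg⟩
    set S0 := Submodule.comap D U' with hS0
    have hkerle : LinearMap.ker D ≤ S0 := by
      intro θ hθ
      simp only [hS0, Submodule.mem_comap, LinearMap.mem_ker.1 hθ]
      exact Submodule.zero_mem _
    have hS0rank : Module.finrank ℝ S0 = k + 1 := by
      have h1 := LinearMap.finrank_range_add_finrank_ker (D.domRestrict S0)
      rw [LinearMap.range_domRestrict, LinearMap.ker_domRestrict] at h1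
      have h2 : Submodule.map D S0 = U' := by
        rw [hS0, Submodule.map_comap_eq, inf_eq_right.2 hU'W]
      have h3 : Module.finrank ℝ (Submodule.comap S0.subtype (LinearMap.ker D)) = 1 := by
        rw [LinearEquiv.finrank_eq (Submodule.comapSubtypeEquivOfLe (q := S0) hkerle), hkerD]
      rw [h2, h3, hU'rank] at h1
      omega
    set U := Submodule.map (Meq : (V → ℝ) →ₗ[ℝ] (V → ℝ)) S0 with hU
    have hUrank : Module.finrank ℝ U = k + 1 := by
      rw [hU, LinearEquiv.finrank_map_eq, hS0rank]
    have hψU : ψ ∈ U := by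
      refine ⟨fun _ => (1:ℝ), ?_, ?_⟩
      · have : D (fun _ => (1:ℝ)) ∈ U' := by rw [hDone]; exact Submodule.zero_mem _
        exact this
      · ext r; simp [hMeq]
    have hUneg : ∀ x ∈ U, x ∉ Submodule.span ℝ {ψ} → x ⬝ᵥ A *ᵥ x < 0 := by
      rintro x ⟨θ, hθ, rfl⟩ hx
      have hxψθ : (Meq : (V → ℝ) →ₗ[ℝ] (V → ℝ)) θ = ψ * θ := rfl
      rw [hxψθ] at hx ⊢
      by_cases hDθ : D θ = 0
      · exfalso
        apply hx
        rw [hconst θ hDθ]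
        rw [Submodule.mem_span_singleton]
        exact ⟨θ r₀, by ext r; simp; ring⟩
      · have := hU'neg (D θ) hθ hDθ
        rw [hre] at this
        rw [← hquad θ]
        exact this
    obtain ⟨Q, hQ⟩ := Submodule.exists_isCompl (Submodule.span ℝ {ψ})
    set Y := U ⊓ Q with hY
    have hYneg : ∀ y ∈ Y, y ≠ 0 → y ⬝ᵥ A *ᵥ y < 0 := by
      rintro y ⟨hyU, hyQ⟩ hy0
      refine hUneg y hyU fun hyspan => hy0 ?_
      have : y ∈ Submodule.span ℝ {ψ} ⊓ Q := ⟨hyspan, hyQ⟩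
      rwa [hQ.inf_eq_bot, Submodule.mem_bot] at this
    have hYle : Module.finrank ℝ Y ≤ negEig A := negdef_subspace_le hA Y hYneg
    have hsup : Y ⊔ Submodule.span ℝ {ψ} = U := by
      apply le_antisymm
      · refine sup_le inf_le_left ?_
        rw [Submodule.span_le, Set.singleton_subset_iff]
        exact hψU
      · intro x hxU
        have hx2 : x ∈ Submodule.span ℝ {ψ} ⊔ Q := by
          rw [hQ.sup_eq_top]; trivial
        obtain ⟨a, ha, b, hb, rfl⟩ := Submodule.mem_sup.1 hx2
        have hbU : b ∈ U := by
          have : b = (a + b) - a := by ring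
          rw [this]
          exact Submodule.sub_mem _ hxU
            ((Submodule.span_le.2 (Set.singleton_subset_iff.2 hψU)) ha)
        exact Submodule.mem_sup.2 ⟨b, ⟨hbU, hb⟩, a, ha, add_comm b a⟩
    have hinf : Y ⊓ Submodule.span ℝ {ψ} = ⊥ := by
      rw [Submodule.eq_bot_iff]
      rintro x ⟨⟨hxU, hxQ⟩, hxs⟩
      have : x ∈ Submodule.span ℝ {ψ} ⊓ Q := ⟨hxs, hxQ⟩
      rwa [hQ.inf_eq_bot, Submodule.mem_bot] at this
    have hd := Submodule.finrank_sup_add_finrank_inf_eq Y (Submodule.span ℝ {ψ})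
    rw [hsup, hinf, finrank_bot, finrank_span_singleton hψ0, hUrank] at hd
    omega
  -- lower bound : membership
  have hmem : ∃ U : Submodule ℝ (E → ℝ), U ≤ LinearMap.range G.cob.mulVecLin ∧
      Module.finrank ℝ U = negEig A ∧
      ∀ x ∈ U, x ≠ 0 → RCLike.re (star x ⬝ᵥ Φ.mulVec x) < 0 := by
    obtain ⟨U, hUrank, hUneg⟩ := exists_negdef_subspace hA
    set f : (V → ℝ) →ₗ[ℝ] (E → ℝ) := D ∘ₗ (Meq.symm : (V → ℝ) →ₗ[ℝ] (V → ℝ)) with hf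
    have hψinv : ∀ x : V → ℝ, ψ * (Meq.symm x) = x := by
      intro x
      ext r
      rw [hMeqs]
      simp only [Pi.mul_apply]
      rw [← mul_assoc, mul_inv_cancel₀ (hψ r), one_mul]
    have hfx : ∀ x, f x = D (Meq.symm x) := fun _ => rfl
    have hfne : ∀ x ∈ U, x ≠ 0 → f x ≠ 0 := by
      intro x hx hx0 hfx0
      rw [hfx] at hfx0
      have hc := hconst _ hfx0
      set c := (Meq.symm x) r₀ with hcdef
      have hxc : x = c • ψ :=
        calc x = ψ * Meq.symm x := (hψinv x).symm
        _ = ψ * (c • fun _ => (1:ℝ)) := by rw [hc]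
        _ = c • ψ := by ext r; simp; ring
      have hq : x ⬝ᵥ A *ᵥ x = 0 := by
        rw [hxc]
        simp only [smul_dotProduct, mulVec_smul, dotProduct_smul, hqψ]
        simp
      exact absurd hq (ne_of_lt (hUneg x hx hx0))
    refine ⟨Submodule.map f U, ?_, ?_, ?_⟩
    · rintro _ ⟨x, hx, rfl⟩
      exact ⟨Meq.symm x, rfl⟩
    · have h1 := LinearMap.finrank_range_add_finrank_ker (f.domRestrict U)
      have h2 : LinearMap.ker (f.domRestrict U) = ⊥ := by
        rw [Submodule.eq_bot_iff]
        rintro ⟨x, hx⟩ hker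
        have : f x = 0 := by
          have := LinearMap.mem_ker.1 hker
          simpa using this
        by_contra h0
        refine hfne x hx ?_ this
        intro hx0
        apply h0
        ext
        simp [hx0]
      rw [LinearMap.range_domRestrict, h2, finrank_bot, hUrank] at h1
      omega
    · rintro _ ⟨x, hx, rfl⟩ hy0
      have hx0 : x ≠ 0 := by
        rintro rfl
        exact hy0 (map_zero f)
      rw [hre]
      have hq := hquad (Meq.symm x)
      rw [hψinv] at hq
      rw [hfx]
      rw [hq]
      exact hUneg x hx hx0
  -- conclude
  rw [negIndexOn]
  apply le_antisymm
  · exact csSup_le ⟨negEig A, hmem⟩ fun k hk => hub k hk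
  · exact le_csSup ⟨negEig A, fun k hk => hub k hk⟩ hmem
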